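/- Let A, B be bounded positive operators on a complex Hilbert space H. Then the sequence of parallel sums ((nA) : B)_{n∈ℕ} is monotone increasing, bounded above by B, and its strong (equivalently, weak pointwise) limit B_a := lim_{n→∞} (nA) : B equals the A-absolutely continuous part of B in the Lebesgue decomposition of B with respect to A. -/

import Mathlib

open Filter

local notation "⟪" x ", " y "⟫" => @inner ℂ _ _ x y

variable {H : Type*} [NormedAddCommGroup H] [InnerProductSpace ℂ H] [CompleteSpace H]

set_option linter.unusedSectionVars false

lemma inner_real_smul_left (v w : H) (t : ℝ) : ⟪t • v, w⟫ = (t:ℂ) * ⟪v, w⟫ := by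
  rw [← algebraMap_smul ℂ t v, inner_smul_left]
  simp [Complex.coe_algebraMap]

noncomputable def qq (T : H →L[ℂ] H) (x : H) : ℝ := (⟪T x, x⟫).re

lemma qq_nonneg {T : H →L[ℂ] H} (hT : T.IsPositive) (x : H) : 0 ≤ qq T x := hT.2 x

lemma inner_self_symm {T : H →L[ℂ] H} (hT : IsSelfAdjoint T) (x y : H) :
    ⟪T x, y⟫ = ⟪x, T y⟫ := by
  conv_lhs => rw [← (ContinuousLinearMap.isSelfAdjoint_iff'.mp hT)]
  exact ContinuousLinearMap.adjoint_inner_left T y x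

lemma inner_symm_re {T : H →L[ℂ] H} (hT : IsSelfAdjoint T) (x y : H) :
    (⟪T x, y⟫).re = (⟪T y, x⟫).re := by
  rw [inner_self_symm hT]
  exact inner_re_symm (𝕜 := ℂ) x (T y)

lemma qq_expand {T : H →L[ℂ] H} (hT : IsSelfAdjoint T) (x y : H) :
    qq T (x + y) = qq T x + 2 * (⟪T x, y⟫).re + qq T y := by
  simp only [qq, map_add, inner_add_left, inner_add_right, Complex.add_re]
  rw [inner_symm_re hT y x]
  ring

lemma qq_neg (T : H →L[ℂ] H) (x : H) : qq T (-x) = qq T x := by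
  simp [qq]

lemma qq_sub (T : H →L[ℂ] H) (S : H →L[ℂ] H) (x : H) :
    qq (T - S) x = qq T x - qq S x := by
  simp [qq, inner_sub_left]

lemma qq_smul_real (T : H →L[ℂ] H) (t : ℝ) (x : H) :
    qq T ((t:ℂ) • x) = t^2 * qq T x := by
  simp only [qq, map_smul, inner_smul_left, inner_smul_right]
  simp [Complex.mul_re]
  ring

/-- Cauchy–Schwarz for the semi-inner product of a positive operator, squared form. -/
lemma reCS_sq {T : H →L[ℂ] H} (hT : T.IsPositive) (x y : H) :
    (⟪T x, y⟫).re ^ 2 ≤ qq T x * qq T y := by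
  have key : ∀ t : ℝ, 0 ≤ qq T x * (t * t) + (2 * (⟪T x, y⟫).re) * t + qq T y := by
    intro t
    have h0 : 0 ≤ qq T ((t:ℂ) • x + y) := qq_nonneg hT _
    rw [qq_expand hT.isSelfAdjoint, qq_smul_real] at h0
    have : (⟪T ((t:ℂ) • x), y⟫).re = t * (⟪T x, y⟫).re := by
      rw [map_smul, inner_smul_left]
      simp [Complex.mul_re]
    rw [this] at h0
    nlinarith [h0]
  have hd := discrim_le_zero key
  rw [discrim] at hd
  nlinarith [hd]

lemma reCS {T : H →L[ℂ] H} (hT : T.IsPositive) (x y : H) :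
    |(⟪T x, y⟫).re| ≤ Real.sqrt (qq T x) * Real.sqrt (qq T y) := by
  have h := reCS_sq hT x y
  have := Real.sqrt_le_sqrt h
  rwa [Real.sqrt_sq_eq_abs, Real.sqrt_mul (qq_nonneg hT x)] at this

lemma sqrt_qq_add {T : H →L[ℂ] H} (hT : T.IsPositive) (x y : H) :
    Real.sqrt (qq T (x + y)) ≤ Real.sqrt (qq T x) + Real.sqrt (qq T y) := by
  have h1 : qq T (x + y) ≤ (Real.sqrt (qq T x) + Real.sqrt (qq T y))^2 := by
    rw [qq_expand hT.isSelfAdjoint]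
    have h2 : (⟪T x, y⟫).re ≤ Real.sqrt (qq T x) * Real.sqrt (qq T y) :=
      le_trans (le_abs_self _) (reCS hT x y)
    have hx := Real.sq_sqrt (qq_nonneg hT x)
    have hy := Real.sq_sqrt (qq_nonneg hT y)
    nlinarith
  calc Real.sqrt (qq T (x + y)) ≤ Real.sqrt ((Real.sqrt (qq T x) + Real.sqrt (qq T y))^2) :=
        Real.sqrt_le_sqrt h1
    _ = _ := Real.sqrt_sq (by positivity)

lemma qq_le_norm (T : H →L[ℂ] H) (x : H) : qq T x ≤ ‖T‖ * ‖x‖^2 := by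
  have h1 : (⟪T x, x⟫).re ≤ ‖(⟪T x, x⟫)‖ := Complex.re_le_norm _
  have h2 : ‖(⟪T x, x⟫ : ℂ)‖ ≤ ‖T x‖ * ‖x‖ := norm_inner_le_norm _ _
  have h3 : ‖T x‖ ≤ ‖T‖ * ‖x‖ := T.le_opNorm x
  have hx : (0:ℝ) ≤ ‖x‖ := norm_nonneg x
  calc qq T x ≤ ‖T x‖ * ‖x‖ := le_trans h1 h2
    _ ≤ (‖T‖ * ‖x‖) * ‖x‖ := by nlinarith [norm_nonneg (T x), T.opNorm_nonneg]
    _ = ‖T‖ * ‖x‖^2 := by ring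

/-- `‖Tx‖² ≤ ‖T‖ ⟨Tx,x⟩` for positive `T`. -/
lemma norm_apply_sq_le {T : H →L[ℂ] H} (hT : T.IsPositive) (x : H) :
    ‖T x‖^2 ≤ ‖T‖ * qq T x := by
  have h1 : ‖T x‖^2 = (⟪T x, T x⟫).re := by
    rw [← inner_self_eq_norm_sq (𝕜 := ℂ)]; rfl
  have h2 : (⟪T x, T x⟫).re ≤ Real.sqrt (qq T x) * Real.sqrt (qq T (T x)) :=
    le_trans (le_abs_self _) (reCS hT x (T x))
  have h3 : qq T (T x) ≤ ‖T‖ * ‖T x‖^2 := qq_le_norm T (T x)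
  have h4 : Real.sqrt (qq T (T x)) ≤ Real.sqrt ‖T‖ * ‖T x‖ := by
    calc Real.sqrt (qq T (T x)) ≤ Real.sqrt (‖T‖ * ‖T x‖^2) := Real.sqrt_le_sqrt h3
      _ = Real.sqrt ‖T‖ * ‖T x‖ := by
          rw [Real.sqrt_mul T.opNorm_nonneg, Real.sqrt_sq (norm_nonneg _)]
  have h5 : ‖T x‖^2 ≤ Real.sqrt (qq T x) * (Real.sqrt ‖T‖ * ‖T x‖) := by
    refine le_trans (h1.le.trans h2) ?_
    have := Real.sqrt_nonneg (qq T x)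
    nlinarith [Real.sqrt_nonneg (qq T (T x))]
  rcases eq_or_lt_of_le (norm_nonneg (T x)) with h | h
  · nlinarith [qq_nonneg hT x, T.opNorm_nonneg]
  · have h6 : ‖T x‖ ≤ Real.sqrt (qq T x) * Real.sqrt ‖T‖ := by
      nlinarith [h5]
    have := Real.sq_sqrt (qq_nonneg hT x)
    have := Real.sq_sqrt T.opNorm_nonneg
    nlinarith [Real.sqrt_nonneg (qq T x), Real.sqrt_nonneg ‖T‖]

/-- positive `T` with form dominated by that of positive `B` has `‖T‖ ≤ ‖B‖`. -/
lemma opNorm_le_opNorm_of_qq_le {T B : H →L[ℂ] H} (hT : T.IsPositive)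
    (h : ∀ x, qq T x ≤ qq B x) : ‖T‖ ≤ ‖B‖ := by
  have key : ∀ x : H, ‖T x‖^2 ≤ ‖T‖ * ‖B‖ * ‖x‖^2 := by
    intro x
    calc ‖T x‖^2 ≤ ‖T‖ * qq T x := norm_apply_sq_le hT x
      _ ≤ ‖T‖ * qq B x := by
          exact mul_le_mul_of_nonneg_left (h x) T.opNorm_nonneg
      _ ≤ ‖T‖ * (‖B‖ * ‖x‖^2) := mul_le_mul_of_nonneg_left (qq_le_norm B x) T.opNorm_nonneg
      _ = ‖T‖ * ‖B‖ * ‖x‖^2 := by ring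
  have hb : ‖T‖ ≤ Real.sqrt (‖T‖ * ‖B‖) := by
    apply T.opNorm_le_bound (Real.sqrt_nonneg _)
    intro x
    have := key x
    have h2 : ‖T x‖ ≤ Real.sqrt (‖T‖ * ‖B‖ * ‖x‖^2) := by
      rw [← Real.sqrt_sq (norm_nonneg (T x))]
      exact Real.sqrt_le_sqrt this
    rwa [Real.sqrt_mul (by positivity), Real.sqrt_sq (norm_nonneg x)] at h2
  have := Real.sq_sqrt (mul_nonneg T.opNorm_nonneg B.opNorm_nonneg)
  nlinarith [T.opNorm_nonneg, B.opNorm_nonneg, Real.sqrt_nonneg (‖T‖*‖B‖)]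

lemma qq_zero (T : H →L[ℂ] H) : qq T 0 = 0 := by simp [qq]

lemma qq_parallelogram {T : H →L[ℂ] H} (hT : IsSelfAdjoint T) (u v : H) :
    qq T u + qq T v = 2 * qq T ((((2:ℝ)⁻¹ : ℝ) : ℂ) • (u + v))
      + 2 * qq T ((((2:ℝ)⁻¹ : ℝ) : ℂ) • (u - v)) := by
  rw [qq_smul_real, qq_smul_real]
  have h1 : qq T (u + v) = qq T u + 2 * (⟪T u, v⟫).re + qq T v := qq_expand hT u v
  have h2 : qq T (u - v) = qq T u - 2 * (⟪T u, v⟫).re + qq T v := by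
    have := qq_expand hT u (-v)
    rw [← sub_eq_add_neg] at this
    rw [this, inner_neg_right]
    simp [qq_neg]
    ring
  rw [h1, h2]; ring

/-- The quadratic-form order: `A ≤ B` iff `⟨Ax, x⟩ ≤ ⟨Bx, x⟩` for all `x`. -/
def QuadLE (A B : H →L[ℂ] H) : Prop :=
  ∀ x : H, (⟪A x, x⟫).re ≤ (⟪B x, x⟫).re

/-- `B` is absolutely continuous with respect to `A` (`B ≪ A`): for every sequence `(xₙ)`,
if `⟨Axₙ, xₙ⟩ → 0` and `⟨B(xₙ−xₘ), xₙ−xₘ⟩ → 0` as `n, m → ∞`, then `⟨Bxₙ, xₙ⟩ → 0`. -/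
def AbsCont (B A : H →L[ℂ] H) : Prop :=
  ∀ x : ℕ → H,
    Tendsto (fun n => (⟪A (x n), x n⟫).re) atTop (nhds 0) →
    (∀ ε > (0 : ℝ), ∃ N : ℕ, ∀ n ≥ N, ∀ m ≥ N,
      (⟪B (x n - x m), x n - x m⟫).re < ε) →
    Tendsto (fun n => (⟪B (x n), x n⟫).re) atTop (nhds 0)

/-- `A` and `B` are mutually singular (`A ⊥ B`): the only bounded positive operator `C` with
`C ≤ A` and `C ≤ B` is `C = 0`. -/
def MutSing (A B : H →L[ℂ] H) : Prop :=
  ∀ C : H →L[ℂ] H, C.IsPositive → QuadLE C A → QuadLE C B → C = 0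

set_option maxHeartbeats 2000000 in
/-- **The absolutely continuous part via parallel sums** (Theorem 4.6, Hilbert space case).
If `P n` is the parallel sum `(nA) : B` (characterized by its quadratic form), then the
sequence `(P n)` is monotone increasing, bounded above by `B`, and converges weakly pointwise
to a positive operator `B_a` which is the `A`-absolutely continuous part of `B`: `B_a ≤ B`,
`B_a ≪ A`, and `B_a` is the greatest positive operator `C ≤ B` with `C ≪ A`. -/
theorem stmt_10 (A B : H →L[ℂ] H) (hA : A.IsPositive) (hB : B.IsPositive)
    (P : ℕ → H →L[ℂ] H) (hP : ∀ n, (P n).IsPositive)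
    (hPform : ∀ n, ∀ x : H, (⟪P n x, x⟫).re =
      ⨅ y : H, ((⟪((n : ℝ) • A) (x - y), x - y⟫).re + (⟪B y, y⟫).re)) :
    (∀ n, QuadLE (P n) (P (n + 1))) ∧ (∀ n, QuadLE (P n) B) ∧
      ∃ Ba : H →L[ℂ] H, Ba.IsPositive ∧
        (∀ x y : H, Tendsto (fun n => ⟪P n x, y⟫) atTop (nhds ⟪Ba x, y⟫)) ∧
        QuadLE Ba B ∧ AbsCont Ba A ∧
        ∀ C : H →L[ℂ] H, C.IsPositive → QuadLE C B → AbsCont C A → QuadLE C Ba := by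
  classical
  have hne : Nonempty H := ⟨0⟩
  -- the parallel sum forms
  have hFeq : ∀ n (x : H), qq (P n) x = ⨅ y : H, ((n:ℝ) * qq A (x - y) + qq B y) := by
    intro n x
    rw [qq, hPform n x]
    congr 1; funext y
    rw [ContinuousLinearMap.smul_apply, inner_real_smul_left]
    simp [qq, Complex.mul_re]
  have hFbdd : ∀ (n : ℕ) (x : H), BddBelow (Set.range fun y : H => ((n:ℝ) * qq A (x - y) + qq B y)) := by
    intro n x
    refine ⟨0, ?_⟩
    rintro r ⟨y, rfl⟩
    have := qq_nonneg hA (x - y)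
    have := qq_nonneg hB y
    positivity
  -- monotone
  have hmono1 : ∀ n, QuadLE (P n) (P (n + 1)) := by
    intro n x
    show qq (P n) x ≤ qq (P (n+1)) x
    rw [hFeq, hFeq]
    refine ciInf_mono (hFbdd n x) fun y => ?_
    have h1 : (n:ℝ) ≤ ((n+1 : ℕ):ℝ) := by exact_mod_cast Nat.le_succ n
    have := qq_nonneg hA (x - y)
    nlinarith
  have hmonoAll : ∀ x : H, Monotone fun n => qq (P n) x :=
    fun x => monotone_nat_of_le_succ fun n => hmono1 n x
  -- bounded by B
  have hleB : ∀ n, QuadLE (P n) B := by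
    intro n x
    show qq (P n) x ≤ qq B x
    rw [hFeq]
    have := ciInf_le (hFbdd n x) x
    simpa [qq_zero] using this
  -- dominated by n • A
  have hPnA : ∀ n (x : H), qq (P n) x ≤ (n:ℝ) * qq A x := by
    intro n x
    rw [hFeq]
    have := ciInf_le (hFbdd n x) 0
    simpa [qq_zero] using this
  -- norms
  have hnorm : ∀ n, ‖P n‖ ≤ ‖B‖ := fun n => opNorm_le_opNorm_of_qq_le (hP n) (hleB n)
  have hdiffpos : ∀ {n m : ℕ}, n ≤ m → (P m - P n).IsPositive := by
    intro n m hnm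
    refine ⟨((hP m).isSelfAdjoint.sub (hP n).isSelfAdjoint).isSymmetric, fun x => ?_⟩
    show 0 ≤ qq (P m - P n) x
    rw [qq_sub]
    have h2 : qq (P n) x ≤ qq (P m) x := hmonoAll x hnm
    linarith
  -- convergence of quadratic forms
  have hbddq : ∀ x : H, BddAbove (Set.range fun n => qq (P n) x) := by
    intro x
    refine ⟨qq B x, ?_⟩
    rintro r ⟨n, rfl⟩
    exact hleB n x
  set L : H → ℝ := fun x => ⨆ n, qq (P n) x with hL
  have hqtend : ∀ x : H, Tendsto (fun n => qq (P n) x) atTop (nhds (L x)) :=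
    fun x => tendsto_atTop_ciSup (hmonoAll x) (hbddq x)
  have hq_le_L : ∀ (n : ℕ) (x : H), qq (P n) x ≤ L x :=
    fun n x => le_ciSup (hbddq x) n
  clear_value L
  -- strong Cauchy property
  have hcauchy : ∀ x : H, CauchySeq fun n => P n x := by
    intro x
    rw [Metric.cauchySeq_iff]
    intro ε hε
    set K : ℝ := 2 * ‖B‖ + 1 with hK
    have hKpos : 0 < K := by positivity
    set δ : ℝ := ε ^ 2 / (2 * K) with hδ
    have hδpos : 0 < δ := by positivity
    obtain ⟨N, hN⟩ := (Metric.tendsto_atTop.mp (hqtend x)) δ hδpos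
    refine ⟨N, fun m hm n hn => ?_⟩
    have key : ∀ p q : ℕ, N ≤ q → q ≤ p → ‖P p x - P q x‖ < ε := by
      intro p q hq hpq
      have hpos := hdiffpos hpq
      have h1 : ‖(P p - P q) x‖ ^ 2 ≤ ‖P p - P q‖ * qq (P p - P q) x := norm_apply_sq_le hpos x
      have h2 : ‖P p - P q‖ ≤ K := by
        have := norm_sub_le (P p) (P q)
        have := hnorm p
        have := hnorm q
        rw [hK]; linarith
      have h3 : qq (P p - P q) x ≤ L x - qq (P q) x := by
        rw [qq_sub]
        have := hq_le_L p x
        linarith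
      have h4 : L x - qq (P q) x < δ := by
        have := hN q hq
        rw [Real.dist_eq, abs_sub_comm, abs_of_nonneg (by linarith [hq_le_L q x])] at this
        linarith
      have h5 : ‖(P p - P q) x‖ ^ 2 < K * δ := by
        have hq0 : 0 ≤ qq (P p - P q) x := qq_nonneg hpos x
        calc ‖(P p - P q) x‖ ^ 2 ≤ ‖P p - P q‖ * qq (P p - P q) x := h1
          _ ≤ K * qq (P p - P q) x := by nlinarith
          _ < K * δ := by
              apply mul_lt_mul_of_pos_left _ hKpos
              linarith
      have h6 : K * δ < ε ^ 2 := by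
        rw [hδ, mul_div_assoc']
        rw [div_lt_iff₀ (by positivity)]
        nlinarith [mul_pos hKpos (pow_pos hε 2)]
      have h7 : ‖(P p - P q) x‖ ^ 2 < ε ^ 2 := lt_trans h5 h6
      have : ‖(P p - P q) x‖ < ε := by nlinarith [norm_nonneg ((P p - P q) x)]
      simpa using this
    rcases le_total n m with h | h
    · rw [dist_eq_norm]
      exact key m n hn h
    · rw [dist_eq_norm, norm_sub_rev]
      exact key n m hm h
  -- the strong limit
  have hconv : ∀ x : H, ∃ l : H, Tendsto (fun n => P n x) atTop (nhds l) :=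
    fun x => cauchySeq_tendsto_of_complete (hcauchy x)
  choose g hg using hconv
  have hgadd : ∀ x y : H, g (x + y) = g x + g y := by
    intro x y
    refine tendsto_nhds_unique (hg (x + y)) ?_
    have := (hg x).add (hg y)
    simpa [map_add] using this
  have hgsmul : ∀ (c : ℂ) (x : H), g (c • x) = c • g x := by
    intro c x
    refine tendsto_nhds_unique (hg (c • x)) ?_
    have := (hg x).const_smul c
    simpa [map_smul] using this
  have hgbound : ∀ x : H, ‖g x‖ ≤ ‖B‖ * ‖x‖ := by
    intro x
    refine le_of_tendsto (hg x).norm (Filter.Eventually.of_forall fun n => ?_)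
    calc ‖P n x‖ ≤ ‖P n‖ * ‖x‖ := (P n).le_opNorm x
      _ ≤ ‖B‖ * ‖x‖ := mul_le_mul_of_nonneg_right (hnorm n) (norm_nonneg x)
  set Ba : H →L[ℂ] H := LinearMap.mkContinuous
    { toFun := g
      map_add' := hgadd
      map_smul' := hgsmul } ‖B‖ hgbound with hBadef
  have hBa_apply : ∀ x, Ba x = g x := fun x => rfl
  clear_value Ba
  have hweak : ∀ x y : H, Tendsto (fun n => ⟪P n x, y⟫) atTop (nhds ⟪Ba x, y⟫) := by
    intro x y
    rw [hBa_apply]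
    exact (hg x).inner tendsto_const_nhds
  have hqBa : ∀ x : H, Tendsto (fun n => qq (P n) x) atTop (nhds (qq Ba x)) := by
    intro x
    exact (Complex.continuous_re.tendsto _).comp (hweak x x)
  have hq_le_Ba : ∀ (n : ℕ) (x : H), qq (P n) x ≤ qq Ba x :=
    fun n x => Monotone.ge_of_tendsto (hmonoAll x) (hqBa x) n
  -- Ba is selfadjoint and positive
  have hBa_sym : ∀ x y : H, ⟪Ba x, y⟫ = ⟪x, Ba y⟫ := by
    intro x y
    refine tendsto_nhds_unique ?_ (tendsto_const_nhds.inner (by rw [hBa_apply]; exact hg y))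
    have : (fun n => ⟪P n x, y⟫) = fun n => ⟪x, P n y⟫ :=
      funext fun n => inner_self_symm (hP n).isSelfAdjoint x y
    rw [← this]
    exact hweak x y
  have hBa_sa : IsSelfAdjoint Ba :=
    ContinuousLinearMap.isSelfAdjoint_iff'.mpr
      (((ContinuousLinearMap.eq_adjoint_iff Ba Ba).mpr hBa_sym).symm)
  have hBa_pos : Ba.IsPositive := by
    refine ⟨hBa_sa.isSymmetric, fun x => ?_⟩
    show 0 ≤ qq Ba x
    exact ge_of_tendsto' (hqBa x) fun n => qq_nonneg (hP n) x
  have hBaB : QuadLE Ba B := by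
    intro x
    show qq Ba x ≤ qq B x
    exact le_of_tendsto (hqBa x) (Filter.Eventually.of_forall fun n => hleB n x)
  have hBaPn : ∀ n : ℕ, (Ba - P n).IsPositive := by
    intro n
    refine ⟨(hBa_sa.sub (hP n).isSelfAdjoint).isSymmetric, fun x => ?_⟩
    show 0 ≤ qq (Ba - P n) x
    rw [qq_sub]
    linarith [hq_le_Ba n x]
  refine ⟨hmono1, hleB, Ba, hBa_pos, hweak, hBaB, ?_, ?_⟩
  · -- Ba ≪ A
    intro x hA0 hCau
    have goal_eq : (fun k => (⟪Ba (x k), x k⟫).re) = fun k => qq Ba (x k) := rfl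
    rw [goal_eq]
    obtain ⟨N₁, hN₁⟩ := hCau 1 one_pos
    set M : ℝ := Real.sqrt (qq Ba (x N₁)) + 1 with hM
    have hM0 : 0 ≤ M := by positivity
    have hMb : ∀ k, N₁ ≤ k → Real.sqrt (qq Ba (x k)) ≤ M := by
      intro k hk
      have h1 : qq Ba (x k - x N₁) < 1 := hN₁ k hk N₁ le_rfl
      have h2 : Real.sqrt (qq Ba (x k - x N₁)) ≤ 1 := by
        rw [show (1:ℝ) = Real.sqrt 1 by rw [Real.sqrt_one]]
        exact Real.sqrt_le_sqrt h1.le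
      calc Real.sqrt (qq Ba (x k))
          = Real.sqrt (qq Ba ((x k - x N₁) + x N₁)) := by rw [sub_add_cancel]
        _ ≤ Real.sqrt (qq Ba (x k - x N₁)) + Real.sqrt (qq Ba (x N₁)) :=
            sqrt_qq_add hBa_pos _ _
        _ ≤ M := by rw [hM]; linarith
    rw [Metric.tendsto_atTop]
    intro ε hε
    set δ : ℝ := (ε / (3 * M + 1)) ^ 2 with hδ
    have hδpos : 0 < δ := by positivity
    have hsδ : Real.sqrt δ = ε / (3 * M + 1) := Real.sqrt_sq (by positivity)
    obtain ⟨N₂, hN₂⟩ := hCau δ hδpos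
    set N : ℕ := max N₁ N₂ with hN
    -- choose n with qq (Ba - P n) (x N) < δ
    have htd : Tendsto (fun n => qq Ba (x N) - qq (P n) (x N)) atTop (nhds 0) := by
      have := (tendsto_const_nhds (x := qq Ba (x N))).sub (hqBa (x N))
      simpa using this
    obtain ⟨n, hn⟩ : ∃ n, qq Ba (x N) - qq (P n) (x N) < δ :=
      (htd.eventually (gt_mem_nhds hδpos)).exists
    -- choose K with n * qq A (x k) < δ for k ≥ K
    have h2 : Tendsto (fun k => (n:ℝ) * qq A (x k)) atTop (nhds 0) := by
      simpa [qq] using hA0.const_mul (n:ℝ)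
    obtain ⟨K₀, hK₀⟩ := Metric.tendsto_atTop.mp h2 δ hδpos
    refine ⟨max K₀ N, fun k hk => ?_⟩
    have hkK₀ : K₀ ≤ k := le_trans (le_max_left _ _) hk
    have hkN : N ≤ k := le_trans (le_max_right _ _) hk
    have hkN₁ : N₁ ≤ k := le_trans (le_max_left _ _) hkN
    have hkN₂ : N₂ ≤ k := le_trans (le_max_right _ _) hkN
    have hNN₁ : N₁ ≤ N := le_max_left _ _
    have hNN₂ : N₂ ≤ N := le_max_right _ _
    -- main decomposition
    have e1 : qq Ba (x k) = (⟪Ba (x k), x k - x N⟫).re + (⟪Ba (x k), x N⟫).re := by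
      rw [qq, ← Complex.add_re, ← inner_add_right, sub_add_cancel]
    have hMk := hMb k hkN₁
    have hMN := hMb N hNN₁
    -- term 1
    have ht1 : (⟪Ba (x k), x k - x N⟫).re ≤ M * Real.sqrt δ := by
      have := le_trans (le_abs_self _) (reCS hBa_pos (x k) (x k - x N))
      have hsm : Real.sqrt (qq Ba (x k - x N)) ≤ Real.sqrt δ :=
        Real.sqrt_le_sqrt (hN₂ k hkN₂ N hNN₂).le
      calc (⟪Ba (x k), x k - x N⟫).re
          ≤ Real.sqrt (qq Ba (x k)) * Real.sqrt (qq Ba (x k - x N)) := this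
        _ ≤ M * Real.sqrt δ := by
            apply mul_le_mul hMk hsm (Real.sqrt_nonneg _) hM0
    -- term 2 split
    have e2 : (⟪Ba (x k), x N⟫).re
        = (⟪(Ba - P n) (x k), x N⟫).re + (⟪P n (x k), x N⟫).re := by
      rw [← Complex.add_re, ← inner_add_left]
      congr 2
      simp
    have ht2a : (⟪(Ba - P n) (x k), x N⟫).re ≤ M * Real.sqrt δ := by
      have hcs := le_trans (le_abs_self _) (reCS (hBaPn n) (x k) (x N))
      have ha : Real.sqrt (qq (Ba - P n) (x k)) ≤ M := by
        refine le_trans (Real.sqrt_le_sqrt ?_) hMk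
        rw [qq_sub]
        linarith [qq_nonneg (hP n) (x k)]
      have hb : Real.sqrt (qq (Ba - P n) (x N)) ≤ Real.sqrt δ := by
        refine Real.sqrt_le_sqrt ?_
        rw [qq_sub]
        linarith
      calc (⟪(Ba - P n) (x k), x N⟫).re
          ≤ Real.sqrt (qq (Ba - P n) (x k)) * Real.sqrt (qq (Ba - P n) (x N)) := hcs
        _ ≤ M * Real.sqrt δ := mul_le_mul ha hb (Real.sqrt_nonneg _) hM0
    have ht2b : (⟪P n (x k), x N⟫).re ≤ Real.sqrt δ * M := by
      have hcs := le_trans (le_abs_self _) (reCS (hP n) (x k) (x N))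
      have hqk : qq (P n) (x k) < δ := by
        have := hK₀ k hkK₀
        rw [Real.dist_eq, sub_zero,
          abs_of_nonneg (mul_nonneg (Nat.cast_nonneg n) (qq_nonneg hA _))] at this
        exact lt_of_le_of_lt (hPnA n (x k)) this
      have ha : Real.sqrt (qq (P n) (x k)) ≤ Real.sqrt δ := Real.sqrt_le_sqrt hqk.le
      have hb : Real.sqrt (qq (P n) (x N)) ≤ M := le_trans (Real.sqrt_le_sqrt (hq_le_Ba n _)) hMN
      calc (⟪P n (x k), x N⟫).re
          ≤ Real.sqrt (qq (P n) (x k)) * Real.sqrt (qq (P n) (x N)) := hcs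
        _ ≤ Real.sqrt δ * M := mul_le_mul ha hb (Real.sqrt_nonneg _) (Real.sqrt_nonneg _)
    have htot : qq Ba (x k) ≤ 3 * M * Real.sqrt δ := by
      rw [e1, e2]; linarith
    rw [Real.dist_eq, sub_zero, abs_of_nonneg (qq_nonneg hBa_pos _)]
    calc qq Ba (x k) ≤ 3 * M * Real.sqrt δ := htot
      _ = 3 * M * (ε / (3 * M + 1)) := by rw [hsδ]
      _ < ε := by
          rw [← mul_div_assoc, div_lt_iff₀ (by positivity)]
          nlinarith
  · -- maximality
    intro C hC hCB hCA x
    show qq C x ≤ qq Ba x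
    -- near minimizers
    have hex : ∀ n : ℕ, ∃ yn : H,
        (n:ℝ) * qq A (x - yn) + qq B yn < qq (P n) x + 1/((n:ℝ)+1) := by
      intro n
      apply exists_lt_of_ciInf_lt
      rw [← hFeq n x]
      have : (0:ℝ) < 1/((n:ℝ)+1) := by positivity
      linarith
    choose y hy using hex
    set z : ℕ → H := fun n => x - y n with hz
    clear_value z
    have hinv_tend : Tendsto (fun n : ℕ => 1/((n:ℝ)+1)) atTop (nhds 0) :=
      tendsto_one_div_add_atTop_nhds_zero_nat
    have hyB : ∀ n : ℕ, qq B (y n) ≤ qq Ba x + 1/((n:ℝ)+1) := by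
      intro n
      have h1 := hy n
      have h2 : 0 ≤ (n:ℝ) * qq A (x - y n) :=
        mul_nonneg (Nat.cast_nonneg n) (qq_nonneg hA _)
      have h3 := hq_le_Ba n x
      linarith
    -- qq A (z n) → 0
    have hzA : Tendsto (fun n => qq A (z n)) atTop (nhds 0) := by
      have hub : ∀ n : ℕ, 1 ≤ n → qq A (z n) ≤ (qq Ba x + 1) / (n:ℝ) := by
        intro n hn
        have hnpos : (0:ℝ) < (n:ℝ) := by exact_mod_cast hn
        have h1 := hy n
        have hi : 1/((n:ℝ)+1) ≤ 1 := by
          rw [div_le_one (by positivity)]; linarith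
        have h2 : (n:ℝ) * qq A (z n) ≤ qq Ba x + 1 := by
          have := qq_nonneg hB (y n)
          have := hq_le_Ba n x
          simp only [hz]
          linarith
        rw [le_div_iff₀ hnpos]
        linarith [h2, mul_comm ((n:ℝ)) (qq A (z n))]
      refine tendsto_of_tendsto_of_tendsto_of_le_of_le'
        (tendsto_const_nhds) (tendsto_const_div_atTop_nhds_zero_nat (qq Ba x + 1)) ?_ ?_
      · exact Filter.Eventually.of_forall fun n => qq_nonneg hA _
      · filter_upwards [eventually_ge_atTop 1] with n hn
        exact hub n hn
    -- B-Cauchy estimate for the near minimizers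
    have hbound : ∀ n m : ℕ, n ≤ m →
        qq B (y n - y m) ≤ 2*(qq Ba x - qq (P n) x) + 2/((n:ℝ)+1) + 2/((m:ℝ)+1) := by
      intro n m hnm
      have hApar := qq_parallelogram hA.isSelfAdjoint (x - y n) (x - y m)
      have hBpar := qq_parallelogram hB.isSelfAdjoint (y n) (y m)
      have hc : (((2:ℝ)⁻¹ : ℝ) : ℂ) = (2:ℂ)⁻¹ := by norm_num
      rw [hc] at hApar hBpar
      have hmid : (2:ℂ)⁻¹ • ((x - y n) + (x - y m)) = x - (2:ℂ)⁻¹ • (y n + y m) := by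
        module
      have hdiff : (2:ℂ)⁻¹ • ((x - y n) - (x - y m)) = (2:ℂ)⁻¹ • (y m - y n) := by
        module
      rw [hmid, hdiff] at hApar
      have hAd : qq A ((2:ℂ)⁻¹ • (y m - y n)) = qq A ((2:ℂ)⁻¹ • (y n - y m)) := by
        have : (2:ℂ)⁻¹ • (y m - y n) = -((2:ℂ)⁻¹ • (y n - y m)) := by module
        rw [this, qq_neg]
      rw [hAd] at hApar
      -- value at midpoint dominates the infimum
      have hmin : qq (P n) x ≤ (n:ℝ) * qq A (x - (2:ℂ)⁻¹ • (y n + y m))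
          + qq B ((2:ℂ)⁻¹ • (y n + y m)) := by
        rw [hFeq]
        exact ciInf_le (hFbdd n x) _
      have hfn : (n:ℝ) * qq A (x - y m) + qq B (y m) ≤ qq Ba x + 1/((m:ℝ)+1) := by
        have h1 : (n:ℝ) * qq A (x - y m) ≤ (m:ℝ) * qq A (x - y m) := by
          apply mul_le_mul_of_nonneg_right _ (qq_nonneg hA _)
          exact_mod_cast hnm
        have h2 := hy m
        have h3 := hq_le_Ba m x
        linarith
      have hyn := hy n
      have hd0 : 0 ≤ (n:ℝ) * qq A ((2:ℂ)⁻¹ • (y n - y m)) :=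
        mul_nonneg (Nat.cast_nonneg n) (qq_nonneg hA _)
      -- quarter identity
      have hquart : qq B ((2:ℂ)⁻¹ • (y n - y m)) = (2:ℝ)⁻¹^2 * qq B (y n - y m) := by
        rw [← hc, qq_smul_real]
      have hAparn : (n:ℝ) * (qq A (x - y n) + qq A (x - y m))
          = (n:ℝ) * (2 * qq A (x - (2:ℂ)⁻¹ • (y n + y m))
            + 2 * qq A ((2:ℂ)⁻¹ • (y n - y m))) := by rw [hApar]
      have h2n : 2/((n:ℝ)+1) = 2*(1/((n:ℝ)+1)) := by ring
      have h2m : 2/((m:ℝ)+1) = 2*(1/((m:ℝ)+1)) := by ring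
      linarith [hAparn, hBpar, hmin, hfn, hyn, hd0, hquart, h2n, h2m]
    -- hence y is B-Cauchy
    set e : ℕ → ℝ := fun k => 2*(qq Ba x - qq (P k) x) + 2/((k:ℝ)+1) with he
    clear_value e
    have he0 : ∀ k, 0 ≤ e k := by
      intro k
      have h1 := hq_le_Ba k x
      have h2 : (0:ℝ) ≤ 2/((k:ℝ)+1) := by positivity
      simp only [he]
      linarith
    have hbound2 : ∀ n m : ℕ, qq B (y n - y m) ≤ e n + e m := by
      intro n m
      rcases le_total n m with h | h
      · have := hbound n m h
        have h1 := hq_le_Ba m x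
        simp only [he]
        linarith [this]
      · have h0 : qq B (y n - y m) = qq B (y m - y n) := by
          rw [← neg_sub, qq_neg]
        have := hbound m n h
        have h1 := hq_le_Ba n x
        simp only [he]
        rw [h0]
        linarith [this]
    have hetend : Tendsto e atTop (nhds 0) := by
      have h1 := ((tendsto_const_nhds (x := qq Ba x)).sub (hqBa x)).const_mul 2
      have h2 := hinv_tend.const_mul 2
      have := h1.add h2
      simp only [sub_self, mul_zero, add_zero, zero_add] at this
      simp only [he]
      convert this using 2 with k
      ring
    have hyCauchy : ∀ ε > (0:ℝ), ∃ N : ℕ, ∀ n ≥ N, ∀ m ≥ N, qq B (y n - y m) < ε := by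
      intro ε hε
      obtain ⟨N, hN⟩ := Metric.tendsto_atTop.mp hetend (ε/2) (by linarith)
      refine ⟨N, fun n hn m hm => ?_⟩
      have h1 := hN n hn
      have h2 := hN m hm
      rw [Real.dist_eq, sub_zero, abs_of_nonneg (he0 n)] at h1
      rw [Real.dist_eq, sub_zero, abs_of_nonneg (he0 m)] at h2
      calc qq B (y n - y m) ≤ e n + e m := hbound2 n m
        _ < ε := by linarith
    -- z is C-Cauchy
    have hzC : ∀ ε > (0:ℝ), ∃ N : ℕ, ∀ n ≥ N, ∀ m ≥ N,
        (⟪C (z n - z m), z n - z m⟫).re < ε := by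
      intro ε hε
      obtain ⟨N, hN⟩ := hyCauchy ε hε
      refine ⟨N, fun n hn m hm => ?_⟩
      have h1 : z n - z m = y m - y n := by
        simp only [hz]
        abel
      calc (⟪C (z n - z m), z n - z m⟫).re = qq C (y m - y n) := by rw [h1]; rfl
        _ ≤ qq B (y m - y n) := hCB _
        _ < ε := hN m hm n hn
    -- apply absolute continuity of C
    have hCz : Tendsto (fun n => qq C (z n)) atTop (nhds 0) := hCA z hzA hzC
    -- final limit comparison
    have hfin : ∀ n : ℕ, Real.sqrt (qq C x)
        ≤ Real.sqrt (qq C (z n)) + Real.sqrt (qq Ba x + 1/((n:ℝ)+1)) := by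
      intro n
      have h1 : Real.sqrt (qq C x) ≤ Real.sqrt (qq C (z n)) + Real.sqrt (qq C (y n)) := by
        have h := sqrt_qq_add hC (z n) (y n)
        have h2 : z n + y n = x := by simp only [hz]; abel
        rwa [h2] at h
      have h2 : Real.sqrt (qq C (y n)) ≤ Real.sqrt (qq Ba x + 1/((n:ℝ)+1)) :=
        Real.sqrt_le_sqrt (le_trans (hCB (y n)) (hyB n))
      linarith
    have hlim : Tendsto
        (fun n : ℕ => Real.sqrt (qq C (z n)) + Real.sqrt (qq Ba x + 1/((n:ℝ)+1)))
        atTop (nhds (Real.sqrt (qq Ba x))) := by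
      have t1 := hCz.sqrt
      rw [Real.sqrt_zero] at t1
      have t2 := ((tendsto_const_nhds (x := qq Ba x)).add hinv_tend).sqrt
      rw [add_zero] at t2
      simpa using t1.add t2
    have hkey : Real.sqrt (qq C x) ≤ Real.sqrt (qq Ba x) :=
      ge_of_tendsto' hlim hfin
    have h0C := qq_nonneg hC x
    have h0Ba := qq_nonneg hBa_pos x
    nlinarith [Real.sq_sqrt h0C, Real.sq_sqrt h0Ba, Real.sqrt_nonneg (qq Ba x),
      Real.sqrt_nonneg (qq C x), hkey]
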